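/- arXiv:2011.10868 — 2 statements merged into one kernel-verified Lean document; each statement's English description precedes it below -/
import Mathlib

section
/- Let k ⊆ K be differential fields, and let a, b be tuples from K with vanishing differential ideals I_k(a) ⊆ k{x}, I_k(b) ⊆ k{y}, I_k(a,b) ⊆ k{x,y}. If I_k(a,b) equals the ideal of k{x,y} generated by I_k(a) and I_k(b), then the vanishing ideal I_{k⟨b⟩}(a) of a over the differential field k⟨b⟩ is generated (as an ideal of k⟨b⟩{x}) by I_k(a). -/
open MvPolynomial

set_option maxHeartbeats 2000000
set_option synthInstance.maxHeartbeats 500000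

/-- Let `k ⊆ K` be differential fields and `a`, `b` tuples from `K`.
Here the ring of differential polynomials over `k` in a tuple `x` of variables indexed
by `ι` is modelled as `MvPolynomial (ι × ℕ) k`, where `(i, n)` stands for `x_i^{(n)}`,
and evaluation at a tuple `a` sends `(i, n)` to `d^[n] (a i)`; the vanishing
(differential) ideal `I_k(a)` is the kernel of this evaluation.
If the vanishing ideal `I_k(a, b)` of the joint tuple equals the ideal generated by
`I_k(a)` and `I_k(b)`, then the vanishing ideal of `a` over the differential field
`k⟨b⟩` generated by `k` and `b` is generated by `I_k(a)`. -/
theorem vanishing_ideal_over_generated_field {K : Type*} [Field K]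
    (d : Derivation ℤ K K) (k : Subfield K) (hk : ∀ x ∈ k, d x ∈ k)
    {ι κ : Type*} (a : ι → K) (b : κ → K)
    -- the vanishing differential ideals of `a`, `b`, and the joint tuple `(a, b)` over `k`
    (Ia : Ideal (MvPolynomial (ι × ℕ) k)) (Ib : Ideal (MvPolynomial (κ × ℕ) k))
    (Iab : Ideal (MvPolynomial ((ι ⊕ κ) × ℕ) k))
    (hIa : Ia = RingHom.ker (aeval (R := k) fun p : ι × ℕ => (⇑d)^[p.2] (a p.1)).toRingHom)
    (hIb : Ib = RingHom.ker (aeval (R := k) fun p : κ × ℕ => (⇑d)^[p.2] (b p.1)).toRingHom)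
    (hIab : Iab = RingHom.ker
      (aeval (R := k) fun p : (ι ⊕ κ) × ℕ => (⇑d)^[p.2] (Sum.elim a b p.1)).toRingHom)
    -- hypothesis: `I_k(a,b) = ⟨I_k(a), I_k(b)⟩`
    (hgen : Iab = Ideal.span
      ((rename (Prod.map Sum.inl id) : MvPolynomial (ι × ℕ) k →ₐ[k] _) '' Ia ∪
        (rename (Prod.map Sum.inr id) : MvPolynomial (κ × ℕ) k →ₐ[k] _) '' Ib))
    -- `F = k⟨b⟩`, the differential subfield of `K` generated by `k` and `b`
    (F : Subfield K)
    (hF : F = Subfield.closure ((k : Set K) ∪ {x | ∃ (j : κ) (n : ℕ), x = (⇑d)^[n] (b j)}))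
    (hkF : k ≤ F) :
    RingHom.ker (aeval (R := F) fun p : ι × ℕ => (⇑d)^[p.2] (a p.1)).toRingHom =
      Ideal.map (MvPolynomial.map (Subfield.inclusion hkF)) Ia := by
  classical
  set incl : k →+* F := (Subfield.inclusion hkF : k →+* F) with hincl
  have hinclK : ∀ c : k, ((incl c : F) : K) = (c : K) := fun c => rfl
  have halgF : ∀ x : F, algebraMap F K x = (x : K) := fun _ => rfl
  have halgk : ∀ x : k, algebraMap k K x = (x : K) := fun _ => rfl
  set ea : MvPolynomial (ι × ℕ) k →+* K :=
    (aeval (R := k) fun p : ι × ℕ => (⇑d)^[p.2] (a p.1)).toRingHom with hea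
  set eb : MvPolynomial (κ × ℕ) k →+* K :=
    (aeval (R := k) fun p : κ × ℕ => (⇑d)^[p.2] (b p.1)).toRingHom with heb
  set eab : MvPolynomial ((ι ⊕ κ) × ℕ) k →+* K :=
    (aeval (R := k) fun p : (ι ⊕ κ) × ℕ => (⇑d)^[p.2] (Sum.elim a b p.1)).toRingHom with heab
  set eF : MvPolynomial (ι × ℕ) F →+* K :=
    (aeval (R := F) fun p : ι × ℕ => (⇑d)^[p.2] (a p.1)).toRingHom with heF
  have hb : ∀ (j : κ) (n : ℕ), (⇑d)^[n] (b j) ∈ F := fun j n => by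
    rw [hF]; exact Subfield.subset_closure (Or.inr ⟨j, n, rfl⟩)
  -- evaluation of `k{y}` at `b`, valued in `F`
  set eFb : MvPolynomial (κ × ℕ) k →+* F :=
    eval₂Hom incl (fun q : κ × ℕ => (⟨(⇑d)^[q.2] (b q.1), hb q.1 q.2⟩ : F)) with heFb
  have heFbK : ∀ q : MvPolynomial (κ × ℕ) k, ((eFb q : F) : K) = eb q := by
    intro q
    have := eval₂_comp_left (F.subtype) incl
      (fun q : κ × ℕ => (⟨(⇑d)^[q.2] (b q.1), hb q.1 q.2⟩ : F)) q
    simp only [heFb, coe_eval₂Hom]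
    rw [show ((eval₂ incl _ q : F) : K) = F.subtype (eval₂ incl _ q) from rfl, this, heb]
    simp only [AlgHom.toRingHom_eq_coe, RingHom.coe_coe, aeval_def]
    congr 1
  -- the substitution map `y ↦ b`
  set w : (ι ⊕ κ) × ℕ → MvPolynomial (ι × ℕ) F := fun q =>
    Sum.elim (fun i => X (i, q.2)) (fun j => C (⟨(⇑d)^[q.2] (b j), hb j q.2⟩ : F)) q.1 with hw
  set φ : MvPolynomial ((ι ⊕ κ) × ℕ) k →+* MvPolynomial (ι × ℕ) F :=
    eval₂Hom ((C : F →+* MvPolynomial (ι × ℕ) F).comp incl) w with hφ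
  -- φ commutes with evaluations
  have hcomm : eF.comp φ = eab := by
    apply MvPolynomial.ringHom_ext
    · intro c
      simp [hφ, heF, heab, hinclK, halgF, halgk]
    · rintro ⟨v, n⟩
      rcases v with i | j
      · simp [hφ, heF, heab, hw, halgF]
      · simp [hφ, heF, heab, hw, halgF]
  -- φ on renamed x-polynomials
  have hφl : ∀ g : MvPolynomial (ι × ℕ) k,
      φ (rename (Prod.map Sum.inl id) g) = MvPolynomial.map incl g := by
    intro g
    simp only [hφ, coe_eval₂Hom, eval₂_rename]
    rw [show MvPolynomial.map incl g = eval₂Hom (C.comp incl) (w ∘ Prod.map Sum.inl id) g from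
      (DFunLike.congr_fun (show eval₂Hom (C.comp incl) (w ∘ Prod.map Sum.inl id) = MvPolynomial.map incl by
        apply MvPolynomial.ringHom_ext <;> intro <;> simp [hw]) g).symm]
    rfl
  -- φ on renamed y-polynomials
  have hφr : ∀ e : MvPolynomial (κ × ℕ) k,
      φ (rename (Prod.map Sum.inr id) e) = C (eFb e) := by
    intro e
    simp only [hφ, coe_eval₂Hom, eval₂_rename, heFb]
    rw [eval₂_comp_left (C : F →+* MvPolynomial (ι × ℕ) F) incl
      (fun q : κ × ℕ => (⟨(⇑d)^[q.2] (b q.1), hb q.1 q.2⟩ : F)) e]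
    congr 1
  -- the reverse inclusion
  have hsup : Ideal.map (MvPolynomial.map incl) Ia ≤ RingHom.ker eF := by
    rw [Ideal.map_le_iff_le_comap]
    intro g hg
    rw [hIa, RingHom.mem_ker] at hg
    simp only [Ideal.mem_comap, RingHom.mem_ker]
    have : eF (MvPolynomial.map incl g) = ea g := by
      simp only [heF, hea, AlgHom.toRingHom_eq_coe, RingHom.coe_coe, aeval_def]
      rw [eval₂_map]
      congr 1
    rw [this]
    exact hg
  -- elements of F as quotients of evaluations
  have hrange : ∀ x ∈ F, ∃ r s : MvPolynomial (κ × ℕ) k, eb s ≠ 0 ∧ eb r = eb s * x := by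
    have hsub : Subring.closure ((k : Set K) ∪ {x | ∃ (j : κ) (n : ℕ), x = (⇑d)^[n] (b j)})
        ≤ eb.range := by
      rw [Subring.closure_le]
      rintro x (hx | ⟨j, n, rfl⟩)
      · exact ⟨C ⟨x, hx⟩, by simp [heb, halgk]⟩
      · exact ⟨X (j, n), by simp [heb]⟩
    intro x hx
    rw [hF, Subfield.mem_closure_iff] at hx
    obtain ⟨y, hy, z, hz, hyz⟩ := hx
    by_cases hz0 : z = 0
    · refine ⟨0, 1, by simp, by simp [← hyz, hz0]⟩
    · obtain ⟨r, hr⟩ := hsub hy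
      obtain ⟨s, hs⟩ := hsub hz
      exact ⟨r, s, by rw [hs]; exact hz0, by rw [hr, hs, ← hyz, mul_div_cancel₀ _ hz0]⟩
  -- main inclusion
  refine le_antisymm (fun p hp => ?_) hsup
  rw [RingHom.mem_ker] at hp
  choose r s hs0 hrs using fun m : (ι × ℕ) →₀ ℕ => hrange ((coeff m p : F) : K) (coeff m p).2
  set T := p.support with hT
  set sden : MvPolynomial (κ × ℕ) k := ∏ m ∈ T, s m with hsden
  have hsdenne : eb sden ≠ 0 := by
    rw [hsden, map_prod]
    exact Finset.prod_ne_zero_iff.mpr fun m _ => hs0 m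
  set R : ((ι × ℕ) →₀ ℕ) → MvPolynomial (κ × ℕ) k :=
    fun m => r m * ∏ m' ∈ T.erase m, s m' with hR
  have hebR : ∀ m ∈ T, eb (R m) = eb sden * ((coeff m p : F) : K) := by
    intro m hm
    rw [hR, map_mul, hrs m, map_prod, hsden, map_prod]
    rw [mul_comm (eb (s m)) _, mul_assoc, ← Finset.mul_prod_erase T (fun x => eb (s x)) hm]
    ring
  set sF : F := ⟨eb sden, by
    have : ∀ q : MvPolynomial (κ × ℕ) k, eb q ∈ F := fun q => by
      rw [← heFbK q]; exact (eFb q).2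
    exact this sden⟩ with hsF
  have hsFne : sF ≠ 0 := fun h => hsdenne (by rw [← show ((sF : F) : K) = eb sden from rfl, h]; rfl)
  set P : MvPolynomial ((ι ⊕ κ) × ℕ) k :=
    ∑ m ∈ T, rename (Prod.map Sum.inl id) (monomial m (1 : k)) *
      rename (Prod.map Sum.inr id) (R m) with hP
  -- φ P = C sF * p
  have hA : φ P = C sF * p := by
    conv_rhs => rw [← support_sum_monomial_coeff p]
    rw [hP, map_sum, Finset.mul_sum]
    refine Finset.sum_congr rfl fun m hm => ?_
    rw [map_mul, hφl, hφr]
    have h1 : MvPolynomial.map incl (monomial m (1 : k)) = monomial m (1 : F) := by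
      rw [map_monomial, map_one]
    have h2 : eFb (R m) = sF * coeff m p := by
      apply Subtype.coe_injective
      show ((eFb (R m) : F) : K) = ((sF * coeff m p : F) : K)
      rw [heFbK]
      exact hebR m hm
    rw [h1, h2, mul_comm, C_mul_monomial, C_mul_monomial, mul_one]
  -- P vanishes at (a, b)
  have hPab : P ∈ Iab := by
    rw [hIab, RingHom.mem_ker, hP, map_sum]
    have heabl : ∀ q : MvPolynomial (ι × ℕ) k, eab (rename (Prod.map Sum.inl id) q) = ea q := by
      intro q
      simp only [heab, hea, AlgHom.toRingHom_eq_coe, RingHom.coe_coe, aeval_rename]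
      congr 1
    have heabr : ∀ q : MvPolynomial (κ × ℕ) k, eab (rename (Prod.map Sum.inr id) q) = eb q := by
      intro q
      simp only [heab, heb, AlgHom.toRingHom_eq_coe, RingHom.coe_coe, aeval_rename]
      congr 1
    have key : ∀ m ∈ T, eab (rename (Prod.map Sum.inl id) (monomial m (1 : k)) *
        rename (Prod.map Sum.inr id) (R m)) =
        eb sden * eF (monomial m (coeff m p)) := by
      intro m hm
      rw [map_mul, heabl, heabr, hebR m hm]
      have e1 : ea (monomial m (1 : k)) = ∏ q ∈ m.support, ((⇑d)^[q.2] (a q.1)) ^ m q := by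
        simp [hea, aeval_monomial, Finsupp.prod]
      have e2 : eF (monomial m (coeff m p)) = (((coeff m p : F) : K)) *
          ∏ q ∈ m.support, ((⇑d)^[q.2] (a q.1)) ^ m q := by
        simp only [heF, AlgHom.toRingHom_eq_coe, RingHom.coe_coe, aeval_monomial]
        rfl
      rw [e1, e2]
      ring
    rw [Finset.sum_congr rfl key, ← Finset.mul_sum, ← map_sum, support_sum_monomial_coeff p, hp,
      mul_zero]
  -- conclude
  have hφP : φ P ∈ Ideal.map (MvPolynomial.map incl) Ia := by
    rw [hgen] at hPab
    have h1 : φ P ∈ Ideal.span (φ '' _) :=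
      Ideal.map_span φ _ ▸ Ideal.mem_map_of_mem φ hPab
    refine Ideal.span_le.mpr ?_ h1
    rintro x ⟨y, hy | hy, rfl⟩
    · obtain ⟨g, hg, rfl⟩ := hy
      rw [show ((rename (Prod.map Sum.inl id) : MvPolynomial (ι × ℕ) k →ₐ[k] _) g : MvPolynomial ((ι ⊕ κ) × ℕ) k) = rename (Prod.map Sum.inl id) g from rfl, hφl]
      exact Ideal.mem_map_of_mem _ hg
    · obtain ⟨e, he, rfl⟩ := hy
      rw [show ((rename (Prod.map Sum.inr id) : MvPolynomial (κ × ℕ) k →ₐ[k] _) e : MvPolynomial ((ι ⊕ κ) × ℕ) k) = rename (Prod.map Sum.inr id) e from rfl, hφr]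
      have : eFb e = 0 := by
        apply Subtype.coe_injective
        show ((eFb e : F) : K) = ((0 : F) : K)
        have he' : e ∈ Ib := he
        rw [hIb, RingHom.mem_ker] at he'
        rw [heFbK]
        simpa using he'
      simp [this]
  rw [hA] at hφP
  have hrw : p = C sF⁻¹ * (C sF * p) := by
    rw [← mul_assoc, ← C_mul, inv_mul_cancel₀ hsFne, C_1, one_mul]
  rw [hrw]
  exact Ideal.mul_mem_left _ _ hφP
end

section
/- Let k be a field, F ⊆ k a subfield, and I ⊆ k[T] an ideal of a polynomial ring (possibly in infinitely many variables) that is generated by polynomials with coefficients in F (i.e., F contains a field of definition of I). Let a be a point with vanishing ideal I over k, and suppose P ∈ F[T][y₁,…,y_N] is a polynomial in extra variables y with coefficients in F[T] such that P(a, α₁, …, α_N) = 0 for elements α₁, …, α_N ∈ k that are algebraically independent over F. Then every coefficient of P viewed as a polynomial in y₁, …, y_N vanishes at a, i.e., P(a, y₁, …, y_N) = 0 identically. -/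
open MvPolynomial

set_option maxHeartbeats 1000000 in
/-- Let `F ⊆ k` be fields, `Ω ⊇ k` a field extension, `a : T → Ω` a point
whose vanishing ideal `I ⊆ k[T]` is generated by polynomials with coefficients in `F`.
If `P ∈ F[T][y₁, …, y_N]` vanishes when evaluated at `a` in the `T`-variables and at
elements `α₁, …, α_N ∈ k` that are algebraically independent over `F` in the
`y`-variables, then every coefficient of `P` (as a polynomial in `y₁, …, y_N`)
vanishes at `a`. -/
theorem coefficients_vanish_of_alg_indep {k Ω : Type*} [Field k] [Field Ω]
    [Algebra k Ω] (F : Subfield k) {T : Type*} (a : T → Ω)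
    (I : Ideal (MvPolynomial T k))
    (hI : I = RingHom.ker (aeval (R := k) a).toRingHom)
    -- `F` contains a field of definition of `I`: `I` is generated by polynomials over `F`
    (S : Set (MvPolynomial T F))
    (hdef : I = Ideal.span (MvPolynomial.map (F.subtype) '' S))
    (N : ℕ) (P : MvPolynomial (Fin N) (MvPolynomial T F))
    (α : Fin N → k) (hα : AlgebraicIndependent F α)
    (hP : eval₂ (eval₂Hom ((algebraMap k Ω).comp F.subtype) a)
        (fun i => algebraMap k Ω (α i)) P = 0) :
    ∀ m : Fin N →₀ ℕ,
      eval₂ ((algebraMap k Ω).comp F.subtype) a (MvPolynomial.coeff m P) = 0 := by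
  classical
  intro m₀
  -- the family of monomials in `α`, `F`-linearly independent in `k`
  set w : (Fin N →₀ ℕ) → k := fun m => ∏ i, α i ^ m i with hw_def
  have hw : LinearIndependent F w := by
    have h1 : LinearIndependent F
        ((aeval (R := F) α).toLinearMap ∘ (basisMonomials (Fin N) F)) :=
      (basisMonomials (Fin N) F).linearIndependent.map'
        (aeval (R := F) α).toLinearMap
        (by rw [LinearMap.ker_eq_bot]; exact hα)
    have h2 : w = (aeval (R := F) α).toLinearMap ∘ (basisMonomials (Fin N) F) := by
      funext m
      simp [coe_basisMonomials, aeval_monomial, Finsupp.prod_pow, hw_def]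
    rw [h2]; exact h1
  have hwinj : Function.Injective w := hw.injective
  -- extend to a basis of `k` over `F` and take the coordinate dual to `w m₀`
  have hs : LinearIndepOn F id (Set.range w) := (linearIndepOn_id_range_iff hwinj).mpr hw
  let b : Module.Basis _ F k := Module.Basis.extend hs
  have hmem : ∀ m, w m ∈ hs.extend (Set.subset_univ _) := fun m =>
    hs.subset_extend _ ⟨m, rfl⟩
  let lam : k →ₗ[F] F := b.coord ⟨w m₀, hmem m₀⟩
  have hlam : ∀ m, lam (w m) = if m = m₀ then 1 else 0 := by
    intro m
    have hb : b ⟨w m, hmem m⟩ = w m := Module.Basis.extend_apply_self hs _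
    have : lam (w m) = b.repr (b ⟨w m, hmem m⟩) ⟨w m₀, hmem m₀⟩ := by
      simp [lam, Module.Basis.coord_apply, hb]
    rw [this, Module.Basis.repr_self, Finsupp.single_apply]
    congr 1
    simp only [eq_iff_iff]
    constructor
    · intro h; exact hwinj (congrArg Subtype.val h)
    · intro h; exact Subtype.ext (congrArg w h)
  have hlam_smul : ∀ (x : F) (y : k), lam ((x : k) * y) = x * lam y := by
    intro x y
    have : (x : k) * y = x • y := by
      rw [Algebra.smul_def]; rfl
    rw [this, map_smul]; rfl
  -- the coefficientwise application of `lam` to polynomials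
  let Λ : MvPolynomial T k → MvPolynomial T F := fun p =>
    ∑ t ∈ p.support, monomial t (lam (coeff t p))
  have hΛcoeff : ∀ (p : MvPolynomial T k) (t : T →₀ ℕ),
      coeff t (Λ p) = lam (coeff t p) := by
    intro p t
    simp only [Λ, coeff_sum, coeff_monomial]
    rw [Finset.sum_ite_eq' p.support t (fun t => lam (coeff t p))]
    split_ifs with h
    · rfl
    · rw [notMem_support_iff.mp h, map_zero]
  have hΛadd : ∀ x y : MvPolynomial T k, Λ (x + y) = Λ x + Λ y := by
    intro x y
    apply MvPolynomial.ext
    intro t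
    simp [hΛcoeff, coeff_add, map_add]
  have hΛzero : Λ 0 = 0 := by
    apply MvPolynomial.ext; intro t; simp [hΛcoeff]
  have hΛmul : ∀ (p : MvPolynomial T k) (s : MvPolynomial T F),
      Λ (p * MvPolynomial.map F.subtype s) = Λ p * s := by
    intro p s
    apply MvPolynomial.ext
    intro t
    rw [hΛcoeff, coeff_mul, coeff_mul, map_sum]
    apply Finset.sum_congr rfl
    intro x _
    rw [coeff_map, hΛcoeff]
    have : coeff x.1 p * (F.subtype (coeff x.2 s)) =
        ((coeff x.2 s : F) : k) * coeff x.1 p := by ring_nf; rfl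
    rw [this, hlam_smul, mul_comm]
  -- the polynomial `g ∈ k[T]`
  set g : MvPolynomial T k :=
    eval₂ (MvPolynomial.map F.subtype) (fun i => C (α i)) P with hg_def
  have hgI : g ∈ I := by
    rw [hI, RingHom.mem_ker]
    have h := eval₂_comp_left ((aeval (R := k) a).toRingHom)
      (MvPolynomial.map F.subtype) (fun i => C (α i)) P
    have h1 : ((aeval (R := k) a).toRingHom).comp (MvPolynomial.map F.subtype) =
        (eval₂Hom ((algebraMap k Ω).comp F.subtype) a : MvPolynomial T F →+* Ω) := by
      refine RingHom.ext fun q => ?_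
      show aeval (R := k) a (MvPolynomial.map F.subtype q) = _
      rw [aeval_def, eval₂_map]
      rfl
    have h2 : ((aeval (R := k) a).toRingHom) ∘ (fun i => (C (α i) : MvPolynomial T k)) =
        fun i => algebraMap k Ω (α i) := by
      funext i
      show aeval (R := k) a (C (α i)) = _
      rw [aeval_C]
    rw [h1, h2] at h
    show aeval (R := k) a g = 0
    rw [hg_def]
    show (aeval (R := k) a).toRingHom (eval₂ (MvPolynomial.map F.subtype) (fun i => C (α i)) P) = 0
    rw [h, hP]
  -- span induction: `Λ` sends `I` into `Ideal.span S`
  have key : ∀ x ∈ Ideal.span (MvPolynomial.map (F.subtype) '' S),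
      ∀ q : MvPolynomial T k, Λ (q * x) ∈ Ideal.span S := by
    intro x hx
    induction hx using Submodule.span_induction with
    | mem y hy =>
      obtain ⟨s, hsS, rfl⟩ := hy
      intro q
      rw [hΛmul]
      exact Ideal.mul_mem_left _ _ (Ideal.subset_span hsS)
    | zero =>
      intro q
      rw [mul_zero, hΛzero]
      exact zero_mem _
    | add x y hx hy ihx ihy =>
      intro q
      rw [mul_add, hΛadd]
      exact add_mem (ihx q) (ihy q)
    | smul c x hx ih =>
      intro q
      rw [smul_eq_mul, ← mul_assoc]
      exact ih (q * c)
  have hΛg : Λ g ∈ Ideal.span S := by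
    have := key g (hdef ▸ hgI) 1
    rwa [one_mul] at this
  -- compute `Λ g = coeff m₀ P`
  have hΛg_eq : Λ g = coeff m₀ P := by
    apply MvPolynomial.ext
    intro t
    rw [hΛcoeff]
    have hcoeffg : coeff t g = ∑ m ∈ P.support,
        ((coeff t (coeff m P) : F) : k) * w m := by
      rw [hg_def, eval₂_eq']
      rw [coeff_sum]
      apply Finset.sum_congr rfl
      intro m _
      have hC : (∏ i, (C (α i) : MvPolynomial T k) ^ m i) = C (w m) := by
        simp only [hw_def]
        rw [map_prod]
        exact Finset.prod_congr rfl fun i _ => (C_pow _ _).symm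
      rw [hC, mul_comm ((MvPolynomial.map F.subtype) (coeff m P)) (C (w m)),
        coeff_C_mul, coeff_map, mul_comm]
      rfl
    rw [hcoeffg, map_sum]
    have : ∀ m ∈ P.support, lam (((coeff t (coeff m P) : F) : k) * w m)
        = if m = m₀ then coeff t (coeff m₀ P) else 0 := by
      intro m _
      rw [hlam_smul, hlam]
      split_ifs with h
      · rw [h, mul_one]
      · rw [mul_zero]
    rw [Finset.sum_congr rfl this, Finset.sum_ite_eq' P.support m₀]
    split_ifs with h
    · rfl
    · rw [notMem_support_iff.mp h]
      simp
  -- conclude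
  have hmemI : MvPolynomial.map F.subtype (coeff m₀ P) ∈ I := by
    rw [hdef, ← Ideal.map_span (MvPolynomial.map F.subtype : MvPolynomial T F →+* MvPolynomial T k)]
    exact Ideal.mem_map_of_mem _ (hΛg_eq ▸ hΛg)
  rw [hI, RingHom.mem_ker] at hmemI
  have : aeval (R := k) a (MvPolynomial.map F.subtype (coeff m₀ P)) = 0 := hmemI
  rw [aeval_def, eval₂_map] at this
  exact this
end
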